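/- Let Ω ⊆ ℝⁿ be a domain (a nonempty open set), let u, v : Ω → ℝ be (Lebesgue) measurable functions that are finite everywhere, and let F : ℝ → ℝ be continuously differentiable (C¹). Then there exists a (Lebesgue) measurable function w : Ω → ℝ such that F(u(x)) − F(v(x)) = (u(x) − v(x))·F′(w(x)) for all x ∈ Ω (a measurable-selection version of the Lagrange mean value theorem). -/

import Mathlib

open MeasureTheory Set

/-- measurable-selection version of the Lagrange mean value theorem.
Let `Ω ⊆ ℝⁿ` be a domain, `u v : Ω → ℝ` Lebesgue measurable functions, and
`F : ℝ → ℝ` of class `C¹`. Then there is a Lebesgue measurable `w : Ω → ℝ` with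
`F (u x) - F (v x) = (u x - v x) * F' (w x)` for all `x ∈ Ω`. -/
theorem stmt5 (n : ℕ) (Ω : Set (Fin n → ℝ)) (hΩo : IsOpen Ω) (hΩne : Ω.Nonempty)
    (u v : (Fin n → ℝ) → ℝ)
    (hu : NullMeasurable u (volume.restrict Ω))
    (hv : NullMeasurable v (volume.restrict Ω))
    (F : ℝ → ℝ) (hF : ContDiff ℝ 1 F) :
    ∃ w : (Fin n → ℝ) → ℝ, NullMeasurable w (volume.restrict Ω) ∧
      ∀ x ∈ Ω, F (u x) - F (v x) = (u x - v x) * deriv F (w x) := by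
  have hFd : Differentiable ℝ F := hF.differentiable one_ne_zero
  have hFc : Continuous F := hFd.continuous
  have hF'c : Continuous (deriv F) := hF.continuous_deriv le_rfl
  -- the set of mean-value points
  set S : ℝ × ℝ → Set ℝ := fun p =>
    {c | c ∈ uIcc p.1 p.2 ∧ deriv F c * (p.1 - p.2) = F p.1 - F p.2} with hS
  have hSne : ∀ p, (S p).Nonempty := by
    rintro ⟨a, b⟩
    rcases lt_trichotomy a b with hab | hab | hab
    · obtain ⟨c, hc, hc'⟩ := exists_hasDerivAt_eq_slope F (deriv F) hab
        (hFc.continuousOn) (fun x _ => (hFd x).hasDerivAt)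
      refine ⟨c, ⟨?_, ?_⟩⟩
      · exact Icc_subset_uIcc (Ioo_subset_Icc_self hc)
      · have hba : b - a ≠ 0 := sub_ne_zero.2 hab.ne'
        field_simp at hc'
        simp only
        linarith [hc']
    · exact ⟨a, by simp [hab, hS]⟩
    · obtain ⟨c, hc, hc'⟩ := exists_hasDerivAt_eq_slope F (deriv F) hab
        (hFc.continuousOn) (fun x _ => (hFd x).hasDerivAt)
      refine ⟨c, ⟨?_, ?_⟩⟩
      · exact Icc_subset_uIcc' (Ioo_subset_Icc_self hc)
      · have hba : a - b ≠ 0 := sub_ne_zero.2 hab.ne'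
        field_simp at hc'
        simp only
        linarith [hc']
  have hScl : ∀ p, IsClosed (S p) := by
    intro p
    have h1 : IsClosed {c : ℝ | c ∈ uIcc p.1 p.2} := by
      rw [uIcc]; exact isClosed_Icc
    exact h1.inter (isClosed_eq (by fun_prop) continuous_const)
  have hSbdd : ∀ p, BddBelow (S p) := fun p =>
    (bddBelow_Icc : BddBelow (uIcc p.1 p.2)).mono (fun c hc => hc.1)
  set h : ℝ × ℝ → ℝ := fun p => sInf (S p) with hh
  have hmem : ∀ p, h p ∈ S p := fun p => (hScl p).csInf_mem (hSne p) (hSbdd p)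
  -- measurability of h
  have hmeas : Measurable h := by
    apply measurable_of_Iic
    intro t
    have key : h ⁻¹' Iic t = ⋃ m : ℕ, (fun q : ℝ × ℝ × ℝ => (q.1, q.2.1)) ''
        {q : ℝ × ℝ × ℝ | q.1 ∈ Icc (-(m : ℝ)) m ∧ q.2.1 ∈ Icc (-(m : ℝ)) m ∧
          q.2.2 ∈ uIcc q.1 q.2.1 ∧ q.2.2 ≤ t ∧
          deriv F q.2.2 * (q.1 - q.2.1) = F q.1 - F q.2.1} := by
      ext p
      constructor
      · intro hp
        have hc := hmem p
        obtain ⟨m, hm⟩ := exists_nat_ge (max |p.1| |p.2|)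
        have h1 : |p.1| ≤ (m : ℝ) := le_trans (le_max_left _ _) hm
        have h2 : |p.2| ≤ (m : ℝ) := le_trans (le_max_right _ _) hm
        rw [abs_le] at h1 h2
        refine mem_iUnion.2 ⟨m, ⟨(p.1, p.2, h p), ⟨⟨h1.1, h1.2⟩, ⟨h2.1, h2.2⟩, hc.1, hp, hc.2⟩, rfl⟩⟩
      · intro hp
        obtain ⟨m, ⟨q, ⟨_, _, hq3, hq4, hq5⟩, hqp⟩⟩ := mem_iUnion.1 hp
        have : q.2.2 ∈ S p := by
          rw [← hqp]; exact ⟨hq3, hq5⟩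
        exact le_trans (csInf_le (hSbdd p) this) hq4
    rw [key]
    refine MeasurableSet.iUnion fun m => ?_
    have hcomp : IsCompact {q : ℝ × ℝ × ℝ | q.1 ∈ Icc (-(m : ℝ)) m ∧ q.2.1 ∈ Icc (-(m : ℝ)) m ∧
        q.2.2 ∈ uIcc q.1 q.2.1 ∧ q.2.2 ≤ t ∧
        deriv F q.2.2 * (q.1 - q.2.1) = F q.1 - F q.2.1} := by
      apply IsCompact.of_isClosed_subset
        ((isCompact_Icc (a := -(m:ℝ)) (b := (m:ℝ))).prod
          ((isCompact_Icc (a := -(m:ℝ)) (b := (m:ℝ))).prod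
            (isCompact_Icc (a := -(m:ℝ)) (b := (m:ℝ)))))
      · have c1 : IsClosed {q : ℝ × ℝ × ℝ | q.1 ∈ Icc (-(m : ℝ)) m} :=
          isClosed_Icc.preimage continuous_fst
        have c2 : IsClosed {q : ℝ × ℝ × ℝ | q.2.1 ∈ Icc (-(m : ℝ)) m} :=
          isClosed_Icc.preimage (continuous_fst.comp continuous_snd)
        have c3 : IsClosed {q : ℝ × ℝ × ℝ | q.2.2 ∈ uIcc q.1 q.2.1} := by
          have : {q : ℝ × ℝ × ℝ | q.2.2 ∈ uIcc q.1 q.2.1} =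
              {q : ℝ × ℝ × ℝ | q.1 ⊓ q.2.1 ≤ q.2.2} ∩ {q : ℝ × ℝ × ℝ | q.2.2 ≤ q.1 ⊔ q.2.1} := by
            ext q; simp only [uIcc, Icc, mem_setOf_eq, mem_inter_iff]
          rw [this]
          exact (isClosed_le (by fun_prop) (by fun_prop)).inter
            (isClosed_le (by fun_prop) (by fun_prop))
        have c4 : IsClosed {q : ℝ × ℝ × ℝ | q.2.2 ≤ t} :=
          isClosed_le (by fun_prop) continuous_const
        have c5 : IsClosed {q : ℝ × ℝ × ℝ | deriv F q.2.2 * (q.1 - q.2.1) = F q.1 - F q.2.1} :=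
          isClosed_eq (by fun_prop) (by fun_prop)
        have heq : {q : ℝ × ℝ × ℝ | q.1 ∈ Icc (-(m : ℝ)) m ∧ q.2.1 ∈ Icc (-(m : ℝ)) m ∧
            q.2.2 ∈ uIcc q.1 q.2.1 ∧ q.2.2 ≤ t ∧
            deriv F q.2.2 * (q.1 - q.2.1) = F q.1 - F q.2.1} =
            (((({q : ℝ × ℝ × ℝ | q.1 ∈ Icc (-(m : ℝ)) m} ∩
              {q : ℝ × ℝ × ℝ | q.2.1 ∈ Icc (-(m : ℝ)) m}) ∩
              {q : ℝ × ℝ × ℝ | q.2.2 ∈ uIcc q.1 q.2.1}) ∩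
              {q : ℝ × ℝ × ℝ | q.2.2 ≤ t}) ∩
              {q : ℝ × ℝ × ℝ | deriv F q.2.2 * (q.1 - q.2.1) = F q.1 - F q.2.1}) := by
          ext q; simp only [mem_setOf_eq, mem_inter_iff]; tauto
        rw [heq]
        exact (((c1.inter c2).inter c3).inter c4).inter c5
      · rintro ⟨a, b, c⟩ ⟨ha, hb, hc, -, -⟩
        refine ⟨ha, hb, ?_⟩
        have h1 : uIcc a b ⊆ Icc (-(m : ℝ)) m := uIcc_subset_Icc ha hb
        exact h1 hc
    exact (hcomp.image (continuous_fst.prodMk (continuous_fst.comp continuous_snd))).measurableSet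
  -- conclude
  refine ⟨fun x => h (u x, v x), ?_, ?_⟩
  · exact (hmeas.comp_aemeasurable ((hu.aemeasurable).prodMk (hv.aemeasurable))).nullMeasurable
  · intro x _
    have := (hmem (u x, v x)).2
    simp only at this
    linarith [this]
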